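/- Let G be a finite simple graph, X ⊆ V(G), and let M be an X-minor of G. If M has an X-spanning path (respectively, an X-spanning cycle) as a subgraph, then G contains an X-spanning generalized path (respectively, an X-spanning generalized cycle). -/

import Mathlib

open SimpleGraph

variable {V : Type*} {W : Type*}

/-- `S` is an `X`-separator of `G`: at least two components of `G - S`
contain a vertex of `X`. -/
def SepSet (G : SimpleGraph V) (X S : Set V) : Prop :=
  ∃ (x y : V) (hx : x ∈ X ∧ x ∉ S) (hy : y ∈ X ∧ y ∉ S),
    ¬ (G.induce Sᶜ).Reachable ⟨x, hx.2⟩ ⟨y, hy.2⟩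

/-- `κ_G(X)`: the largest `k ≤ |X| - 1` such that every `X`-separator of `G`
has at least `k` vertices. -/
noncomputable def graphKappa (G : SimpleGraph V) (X : Set V) : ℕ :=
  sSup {k : ℕ | k ≤ X.ncard - 1 ∧ ∀ S : Set V, SepSet G X S → k ≤ S.ncard}

/-- `G/vy`: the graph obtained from `G` by contracting the edge `vy` into `v`,
i.e. `y` is removed (it becomes an isolated vertex of the ambient type) and an
edge `vz` is added for every `z` with `yz ∈ E(G)` and `vz ∉ E(G)`. -/
def contractEdge (G : SimpleGraph V) (v y : V) : SimpleGraph V where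
  Adj a b := a ≠ y ∧ b ≠ y ∧ a ≠ b ∧
    (G.Adj a b ∨ (a = v ∧ G.Adj y b) ∨ (b = v ∧ G.Adj a y))
  symm := by
    constructor
    rintro a b ⟨ha, hb, hab, h⟩
    refine ⟨hb, ha, hab.symm, ?_⟩
    rcases h with h | ⟨rfl, h⟩ | ⟨rfl, h⟩
    · exact Or.inl h.symm
    · exact Or.inr (Or.inr ⟨rfl, h.symm⟩)
    · exact Or.inr (Or.inl ⟨rfl, h.symm⟩)
  loopless := ⟨by rintro a ⟨_, _, h, _⟩; exact h rfl⟩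

/-- All edges of the graph `H` lie inside the vertex set `U`; this lets a pair
`(U, H)` with `IsGraphOn H U` model a graph whose vertex set is `U ⊆ V`. -/
def IsGraphOn (H : SimpleGraph V) (U : Set V) : Prop :=
  ∀ a b, H.Adj a b → a ∈ U ∧ b ∈ U

/-- `ContractSeq X U H U' M`: the graph `M` on the vertex set `U'` is obtained
from the graph `H` on the vertex set `U` by a (possibly empty) sequence of
contractions of `X`-legal edges (an edge `vy` is `X`-legal if `y ∉ X`; it is
contracted into `v`). -/
inductive ContractSeq (X : Set V) : Set V → SimpleGraph V → Set V → SimpleGraph V → Prop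
  | refl (U : Set V) (H : SimpleGraph V) : ContractSeq X U H U H
  | step {U : Set V} {H : SimpleGraph V} {U' : Set V} {M : SimpleGraph V}
      (v y : V) (hadj : H.Adj v y) (hy : y ∉ X)
      (htail : ContractSeq X (U \ {y}) (contractEdge H v y) U' M) :
      ContractSeq X U H U' M

/-- `M`, a graph with vertex set `U ⊆ V`, is an `X`-minor of `G` (a minor of
`G` rooted at `X`): it is obtained from a subgraph of `G` containing `X` by a
(possibly empty) sequence of contractions of `X`-legal edges. -/
def IsXMinorOn (G : SimpleGraph V) (X : Set V) (U : Set V) (M : SimpleGraph V) : Prop :=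
  ∃ (U₀ : Set V) (H : SimpleGraph V), H ≤ G ∧ IsGraphOn H U₀ ∧ X ⊆ U₀ ∧
    ContractSeq X U₀ H U M

/-- `G` has an `X`-spanning generalized path: an edge-disjoint union of a path
`W` of `G` and `|X|` pairwise vertex-disjoint paths `P x` (for `x ∈ X`) from
`x` to a vertex `y x` of `W` such that `P x` meets `X` only in `x` and meets
`W` only in `y x` (possibly `x = y x`). -/
def HasGeneralizedXPath (G : SimpleGraph V) (X : Set V) : Prop :=
  ∃ (u v : V) (W : G.Walk u v), W.IsPath ∧
    ∃ (y : V → V) (P : (x : V) → x ∈ X → G.Walk x (y x)),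
      (∀ x hx, (P x hx).IsPath) ∧
      (∀ x hx, ∀ z ∈ (P x hx).support, z ∈ X → z = x) ∧
      (∀ x hx, ∀ z ∈ (P x hx).support, (z ∈ W.support ↔ z = y x)) ∧
      (∀ x hx x' hx', x ≠ x' →
        ∀ z, z ∈ (P x hx).support → z ∉ (P x' hx').support)

/-- `G` has an `X`-spanning generalized cycle: as in
`HasGeneralizedXPath`, with the path `W` replaced by a cycle `C` of `G`. -/
def HasGeneralizedXCycle (G : SimpleGraph V) (X : Set V) : Prop :=
  ∃ (w : V) (C : G.Walk w w), C.IsCycle ∧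
    ∃ (y : V → V) (P : (x : V) → x ∈ X → G.Walk x (y x)),
      (∀ x hx, (P x hx).IsPath) ∧
      (∀ x hx, ∀ z ∈ (P x hx).support, z ∈ X → z = x) ∧
      (∀ x hx, ∀ z ∈ (P x hx).support, (z ∈ C.support ↔ z = y x)) ∧
      (∀ x hx x' hx', x ≠ x' →
        ∀ z, z ∈ (P x hx).support → z ∉ (P x' hx').support)



section Aux
variable {V : Type*}

/-- Appending two paths that meet only at the junction gives a path. -/
lemma isPath_append_aux {H : SimpleGraph V} : ∀ {a b c : V} {p : H.Walk a b} {q : H.Walk b c},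
    p.IsPath → q.IsPath → (∀ z ∈ p.support, z ∈ q.support → z = b) → (p.append q).IsPath := by
  intro a b c p
  induction p with
  | nil => intro q _ hq _; simpa using hq
  | @cons a d b h' p' ih =>
      intro q hp hq hmeet
      rw [Walk.cons_append, Walk.cons_isPath_iff]
      rw [Walk.cons_isPath_iff] at hp
      refine ⟨ih hp.1 hq (fun z hz => hmeet z (by simp [hz])), ?_⟩
      rw [Walk.mem_support_append_iff]
      rintro (h1 | h2)
      · exact hp.2 h1
      · have : a = b := hmeet a (by simp) h2
        exact hp.2 (this ▸ p'.end_mem_support)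

/-- First hit of a set along a path. -/
lemma exists_firstHit {H : SimpleGraph V} (S : Set V) : ∀ {a b : V} (P : H.Walk a b),
    P.IsPath → b ∈ S →
    ∃ (c : V) (P' : H.Walk a c), P'.IsPath ∧ c ∈ S ∧ (∀ z ∈ P'.support, z ∈ S → z = c) ∧
      (∀ z ∈ P'.support, z ∈ P.support) := by
  intro a b P
  induction P with
  | nil => intro _ hb; exact ⟨_, Walk.nil, by simp, hb, by simp, by simp⟩
  | @cons a d b h rest ih =>
      intro hP hb
      by_cases haS : a ∈ S
      · exact ⟨a, Walk.nil, by simp, haS, by simp, by simp⟩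
      · rw [Walk.cons_isPath_iff] at hP
        obtain ⟨c, P'', h1, h2, h3, h4⟩ := ih hP.1 hb
        refine ⟨c, Walk.cons h P'', ?_, h2, ?_, ?_⟩
        · rw [Walk.cons_isPath_iff]
          exact ⟨h1, fun hmem => hP.2 (h4 a hmem)⟩
        · intro z hz hzS
          rcases List.mem_cons.mp (by simpa using hz) with rfl | hz'
          · exact absurd hzS haS
          · exact h3 z hz' hzS
        · intro z hz
          rcases List.mem_cons.mp (by simpa using hz) with rfl | hz'
          · simp
          · simp [h4 z hz']

lemma ContractSeq.subset {X U U' : Set V} {H M : SimpleGraph V}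
    (h : ContractSeq X U H U' M) : U' ⊆ U := by
  induction h with
  | refl => exact subset_rfl
  | step v y hadj hy htail ih => exact ih.trans Set.diff_subset

/-- Lift a walk of the contracted graph back to the original graph. -/
lemma lift_contract_walk {H : SimpleGraph V} {v y : V} (hadj : H.Adj v y) :
    ∀ {a b : V} (w : (contractEdge H v y).Walk a b),
    ∃ w' : H.Walk a b, ∀ z ∈ w'.support, z ∈ w.support ∨ (z = y ∧ v ∈ w.support) := by
  intro a b w
  induction w with
  | nil => exact ⟨Walk.nil, by simp⟩
  | @cons a c b h rest ih =>
      obtain ⟨w'', hw''⟩ := ih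
      obtain ⟨ha, hc, hne, hor⟩ := id h
      have step : ∀ z ∈ rest.support, z ∈ (Walk.cons h rest).support ∨
          (z = y ∧ v ∈ (Walk.cons h rest).support) := by
        intro z hz; exact Or.inl (by simp [hz])
      have step' : ∀ z ∈ w''.support, z ∈ (Walk.cons h rest).support ∨
          (z = y ∧ v ∈ (Walk.cons h rest).support) := by
        intro z hz
        rcases hw'' z hz with h1 | ⟨rfl, h2⟩
        · exact Or.inl (by simp [h1])
        · exact Or.inr ⟨rfl, by simp [h2]⟩
      rcases hor with hr | ⟨rfl, hr⟩ | ⟨rfl, hr⟩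
      · refine ⟨Walk.cons hr w'', ?_⟩
        intro z hz
        rcases List.mem_cons.mp (by simpa using hz) with rfl | hz'
        · exact Or.inl (by simp)
        · exact step' z hz'
      · -- a = v, H.Adj y c : go v - y - c
        refine ⟨Walk.cons hadj (Walk.cons hr w''), ?_⟩
        intro z hz
        rcases (by simpa using hz : z = a ∨ z = y ∨ z ∈ w''.support) with rfl | rfl | hz''
        · exact Or.inl (by simp)
        · exact Or.inr ⟨rfl, by simp⟩
        · exact step' z hz''
      · -- c = v, H.Adj a y : go a - y - v
        refine ⟨Walk.cons hr (Walk.cons hadj.symm w''), ?_⟩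
        intro z hz
        rcases (by simpa using hz : z = a ∨ z = y ∨ z ∈ w''.support) with rfl | rfl | hz''
        · exact Or.inl (by simp)
        · exact Or.inr ⟨rfl, by rw [Walk.support_cons]; exact List.mem_cons_of_mem _ rest.start_mem_support⟩
        · exact step' z hz''

lemma not_mem_support_contract {H : SimpleGraph V} {v y : V} :
    ∀ {a b : V}, a ≠ y → ∀ (w : (contractEdge H v y).Walk a b), y ∉ w.support := by
  intro a b ha w
  induction w with
  | nil => simpa using fun h => ha h.symm
  | @cons a c b h rest ih =>
      intro hmem
      rcases List.mem_cons.mp (by simpa using hmem) with h' | h'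
      · exact ha h'.symm
      · exact ih (fun hc => h.2.1 hc) h'

lemma ContractSeq.exists_phi {X U U' : Set V} {H M : SimpleGraph V}
    (h : ContractSeq X U H U' M) :
    ∃ φ : V → V,
      (∀ m ∈ U', φ m = m) ∧
      (∀ u, ∃ w : H.Walk u (φ u), ∀ z ∈ w.support, φ z = φ u) ∧
      (∀ a b, M.Adj a b → ∃ p q, φ p = a ∧ φ q = b ∧ H.Adj p q) := by
  induction h with
  | refl U H =>
      exact ⟨id, fun m _ => rfl, fun u => ⟨Walk.nil, by simp⟩,
        fun a b hab => ⟨a, b, rfl, rfl, hab⟩⟩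
  | @step U H U' M v y hadj hy htail ih =>
      obtain ⟨φ', h1, h2, h3⟩ := ih
      have hyU' : y ∉ U' := fun hmem => (htail.subset hmem).2 rfl
      classical
      set φ : V → V := fun z => if z = y then φ' v else φ' z with hφ
      have hφy : φ y = φ' v := by simp [hφ]
      have hφne : ∀ z, z ≠ y → φ z = φ' z := by intro z hz; simp [hφ, hz]
      refine ⟨φ, ?_, ?_, ?_⟩
      · intro m hm
        have hmy : m ≠ y := fun h => hyU' (h ▸ hm)
        rw [hφne m hmy]; exact h1 m hm
      · intro u
        by_cases hu : u = y
        · obtain ⟨w', hw'⟩ := h2 v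
          obtain ⟨w'', hw''⟩ := lift_contract_walk hadj w'
          have hφu : φ u = φ' v := by rw [hu]; exact hφy
          refine ⟨Walk.cons (hu ▸ hadj.symm) (w''.copy rfl hφu.symm), ?_⟩
          intro z hz
          rw [hφu]
          rcases List.mem_cons.mp (by simpa using hz) with rfl | hz'
          · exact hφu
          rcases hw'' z hz' with hmem | ⟨rfl, _⟩
          · by_cases hzy : z = y
            · rw [hzy, hφy]
            · rw [hφne z hzy]; exact hw' z hmem
          · exact hφy
        · obtain ⟨w', hw'⟩ := h2 u
          obtain ⟨w'', hw''⟩ := lift_contract_walk hadj w'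
          refine ⟨w''.copy rfl (hφne u hu).symm, ?_⟩
          intro z hz
          rw [Walk.support_copy] at hz
          rw [hφne u hu]
          rcases hw'' z hz with hmem | ⟨rfl, hv⟩
          · have hzy : z ≠ y := by
              intro hzy; exact not_mem_support_contract hu w' (hzy ▸ hmem)
            rw [hφne z hzy]; exact hw' z hmem
          · rw [hφy]; exact hw' v hv
      · intro a b hab
        obtain ⟨p', q', hp, hq, hpq⟩ := h3 a b hab
        obtain ⟨hp'y, hq'y, hne, hor⟩ := hpq
        rcases hor with hr | ⟨rfl, hr⟩ | ⟨rfl, hr⟩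
        · exact ⟨p', q', by rw [hφne p' hp'y]; exact hp, by rw [hφne q' hq'y]; exact hq, hr⟩
        · exact ⟨y, q', by rw [hφy]; exact hp, by rw [hφne q' hq'y]; exact hq, hr⟩
        · exact ⟨p', y, by rw [hφne p' hp'y]; exact hp, by rw [hφy]; exact hq, hr⟩

lemma ContractSeq.X_subset {X U U' : Set V} {H M : SimpleGraph V}
    (h : ContractSeq X U H U' M) (hX : X ⊆ U) : X ⊆ U' := by
  induction h with
  | refl => exact hX
  | step v y hadj hy htail ih =>
      exact ih (fun x hx => ⟨hX hx, fun he => hy (he ▸ hx)⟩)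

lemma fiber_path {H : SimpleGraph V} {φ : V → V}
    (hconn : ∀ u, ∃ w : H.Walk u (φ u), ∀ z ∈ w.support, φ z = φ u)
    {c d m : V} (hc : φ c = m) (hd : φ d = m) :
    ∃ R : H.Walk c d, R.IsPath ∧ ∀ z ∈ R.support, φ z = m := by
  classical
  obtain ⟨w1, hw1⟩ := hconn c
  obtain ⟨w2, hw2⟩ := hconn d
  refine ⟨(w1.append ((w2.reverse).copy (by rw [hd, ← hc]) rfl)).bypass,
    Walk.bypass_isPath _, ?_⟩
  intro z hz
  have hz' := Walk.support_bypass_subset _ hz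
  rw [Walk.mem_support_append_iff] at hz'
  rcases hz' with h1 | h2
  · rw [hw1 z h1, hc]
  · rw [Walk.support_copy, Walk.support_reverse, List.mem_reverse] at h2
    rw [hw2 z h2, hd]

lemma key_path {H M : SimpleGraph V} {φ : V → V}
    (hconn : ∀ u, ∃ w : H.Walk u (φ u), ∀ z ∈ w.support, φ z = φ u)
    (hedge : ∀ a b, M.Adj a b → ∃ p q, φ p = a ∧ φ q = b ∧ H.Adj p q) :
    ∀ {u v : V} (W : M.Walk u v), W.IsPath → ¬ W.Nil →
    ∃ (a b : V) (Q : H.Walk a b), Q.IsPath ∧ φ a = u ∧ φ b = v ∧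
      (∀ z ∈ Q.support, φ z ∈ W.support) ∧
      (∀ m ∈ W.support, ∃ c ∈ Q.support, φ c = m) ∧
      (∀ z ∈ Q.support, φ z = u → z = a) ∧
      (∀ z ∈ Q.support, φ z = v → z = b) := by
  intro u v W
  induction W with
  | nil => intro _ hnil; exact absurd Walk.nil_nil hnil
  | @cons u u' v h W' ih =>
      intro hP _
      rw [Walk.cons_isPath_iff] at hP
      have huW' : u ∉ W'.support := hP.2
      have hu'W' : u' ∈ W'.support := W'.start_mem_support
      have hvW' : v ∈ W'.support := W'.end_mem_support
      have huu' : u ≠ u' := fun he => huW' (he ▸ hu'W')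
      have huv : u ≠ v := fun he => huW' (he ▸ hvW')
      obtain ⟨p, q, hp, hq, hpq⟩ := hedge u u' h
      by_cases hn : W'.Nil
      · -- base case : W' is nil, u' = v
        have hsupp : W'.support = [u'] := Walk.nil_iff_support_eq.mp hn
        have hu'v : u' = v := hn.eq
        refine ⟨p, q, Walk.cons hpq Walk.nil, ?_, hp, by rw [hq, hu'v], ?_, ?_, ?_, ?_⟩
        · simp [hpq.ne]
        · intro z hz
          rcases (by simpa using hz : z = p ∨ z = q) with rfl | rfl
          · simp [hp]
          · rw [hq]; simp [hu'W']
        · intro m hm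
          rcases (by simpa [hsupp] using hm : m = u ∨ m = u') with rfl | rfl
          · exact ⟨p, by simp, hp⟩
          · exact ⟨q, by simp, hq⟩
        · intro z hz hzu
          rcases (by simpa using hz : z = p ∨ z = q) with rfl | rfl
          · rfl
          · exact absurd (hq ▸ hzu).symm huu'
        · intro z hz hzv
          rcases (by simpa using hz : z = p ∨ z = q) with rfl | rfl
          · exact absurd (hp ▸ hzv) huv
          · rfl
      · -- inductive step
        have hu'v : u' ≠ v := by
          intro he
          subst he
          exact hn (Walk.nil_iff_eq_nil.mpr (Walk.isPath_iff_eq_nil |>.mp hP.1))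
        obtain ⟨a', b, Q', hQ'path, hφa', hφb, hsupmap, hcover, hstartinv, hendinv⟩ :=
          ih hP.1 hn
        obtain ⟨R, hRpath, hRfib⟩ := fiber_path hconn hq hφa'
        obtain ⟨c, R', hR'path, hcS, hfirst, hR'sub⟩ :=
          exists_firstHit {z | z ∈ Q'.support} R hRpath (by exact Q'.start_mem_support)
        have hR'fib : ∀ z ∈ R'.support, φ z = u' := fun z hz => hRfib z (hR'sub z hz)
        obtain rfl : c = a' := hstartinv c hcS (hR'fib c R'.end_mem_support)
        refine ⟨p, b, Walk.cons hpq (R'.append Q'), ?_, hp, hφb, ?_, ?_, ?_, ?_⟩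
        · rw [Walk.cons_isPath_iff]
          constructor
          · exact isPath_append_aux hR'path hQ'path hfirst
          · rw [Walk.mem_support_append_iff]
            rintro (h1 | h2)
            · exact huu' (hp ▸ hR'fib p h1).symm.symm
            · exact huW' (hp ▸ hsupmap p h2)
        · intro z hz
          rcases (by simpa [Walk.mem_support_append_iff] using hz :
              z = p ∨ z ∈ R'.support ∨ z ∈ Q'.support) with rfl | hz' | hz'
          · rw [hp]; simp
          · rw [hR'fib z hz']; simp [hu'W']
          · simp [hsupmap z hz']
        · intro m hm
          rcases (by simpa using hm : m = u ∨ m ∈ W'.support) with rfl | hm'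
          · exact ⟨p, by simp, hp⟩
          · obtain ⟨c', hc', hφc'⟩ := hcover m hm'
            exact ⟨c', by simp [Walk.mem_support_append_iff, hc'], hφc'⟩
        · intro z hz hzu
          rcases (by simpa [Walk.mem_support_append_iff] using hz :
              z = p ∨ z ∈ R'.support ∨ z ∈ Q'.support) with rfl | hz' | hz'
          · rfl
          · exact absurd (hR'fib z hz' ▸ hzu).symm huu'
          · exact absurd (hzu ▸ hsupmap z hz') huW'
        · intro z hz hzv
          rcases (by simpa [Walk.mem_support_append_iff] using hz :
              z = p ∨ z ∈ R'.support ∨ z ∈ Q'.support) with rfl | hz' | hz'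
          · exact absurd (hp ▸ hzv) huv
          · exact absurd (hR'fib z hz' ▸ hzv)  hu'v
          · exact hendinv z hz' hzv

lemma support_mapLe_eq {G G' : SimpleGraph V} (h : G ≤ G') {u v : V} (p : G.Walk u v) :
    (p.mapLe h).support = p.support := by
  rw [Walk.mapLe, Walk.support_map]
  exact List.map_id' _

lemma path_first_edge {H : SimpleGraph V} {x y z : V} (T : H.Walk x y) (hT : T.IsPath)
    (he : s(x, z) ∈ T.edges) : ∃ (h : H.Adj x z) (T' : H.Walk z y), T = Walk.cons h T' := by
  cases T with
  | nil => simp at he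
  | @cons x d y h' T'' =>
      rw [Walk.edges_cons, List.mem_cons] at he
      rcases he with heq | hmem
      · rcases Sym2.eq_iff.mp heq with ⟨-, rfl⟩ | ⟨rfl, rfl⟩
        · exact ⟨h', T'', rfl⟩
        · exact (h'.ne rfl).elim
      · have hx := Walk.fst_mem_support_of_mem_edges T'' hmem
        rw [Walk.cons_isPath_iff] at hT
        exact absurd hx hT.2

lemma pendants_exist {G H : SimpleGraph V} (hHG : H ≤ G) {φ : V → V}
    (hconn : ∀ u, ∃ w : H.Walk u (φ u), ∀ z ∈ w.support, φ z = φ u)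
    (X : Set V) (hXfix : ∀ x ∈ X, φ x = x) (L : List V)
    (hrep : ∀ x ∈ X, ∃ c ∈ L, φ c = x) :
    ∃ (y : V → V) (P : (x : V) → x ∈ X → G.Walk x (y x)),
      (∀ x hx, (P x hx).IsPath) ∧
      (∀ x hx, ∀ z ∈ (P x hx).support, z ∈ X → z = x) ∧
      (∀ x hx, ∀ z ∈ (P x hx).support, (z ∈ L ↔ z = y x)) ∧
      (∀ x hx x' hx', x ≠ x' →
        ∀ z, z ∈ (P x hx).support → z ∉ (P x' hx').support) := by
  have main : ∀ x : V, ∃ yx : V, ∀ _ : x ∈ X, ∃ P : G.Walk x yx, P.IsPath ∧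
      (∀ z ∈ P.support, φ z = x) ∧ yx ∈ L ∧ (∀ z ∈ P.support, z ∈ L → z = yx) := by
    intro x
    by_cases hx : x ∈ X
    · obtain ⟨c, hcL, hφc⟩ := hrep x hx
      obtain ⟨R, hRpath, hRfib⟩ := fiber_path hconn (hXfix x hx) hφc
      obtain ⟨yx, P', hP'path, hyL, hfirst, hsub⟩ :=
        exists_firstHit {z | z ∈ L} R hRpath hcL
      refine ⟨yx, fun _ => ⟨P'.mapLe hHG, ?_, ?_, hyL, ?_⟩⟩
      · exact hP'path.mapLe _
      · intro z hz
        rw [support_mapLe_eq] at hz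
        exact hRfib z (hsub z hz)
      · intro z hz hzL
        rw [support_mapLe_eq] at hz
        exact hfirst z hz hzL
    · exact ⟨x, fun hx' => absurd hx' hx⟩
  choose y hy using main
  choose P hP using hy
  refine ⟨y, P, fun x hx => (hP x hx).1, ?_, ?_, ?_⟩
  · intro x hx z hz hzX
    have := (hP x hx).2.1 z hz
    rw [hXfix z hzX] at this
    exact this
  · intro x hx z hz
    constructor
    · intro hzL; exact (hP x hx).2.2.2 z hz hzL
    · rintro rfl; exact (hP x hx).2.2.1
  · intro x hx x' hx' hne z hz hz'
    have h1 := (hP x hx).2.1 z hz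
    have h2 := (hP x' hx').2.1 z hz'
    exact hne (h1 ▸ h2)

end Aux

/-- Observation: if `M` (with vertex set `U`) is an `X`-minor of the finite
simple graph `G` and `M` has an `X`-spanning path (resp. an `X`-spanning
cycle), then `G` contains an `X`-spanning generalized path (resp. an
`X`-spanning generalized cycle). -/
theorem generalized_from_minor {V : Type*} [Fintype V] (G : SimpleGraph V)
    (X : Set V) (U : Set V) (M : SimpleGraph V) (hM : IsXMinorOn G X U M) :
    ((∃ (u v : V) (W : M.Walk u v), W.IsPath ∧ ∀ x ∈ X, x ∈ W.support) →
        HasGeneralizedXPath G X) ∧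
    ((∃ (w : V) (C : M.Walk w w), C.IsCycle ∧ ∀ x ∈ X, x ∈ C.support) →
        HasGeneralizedXCycle G X) := by
  classical
  obtain ⟨U₀, H, hHG, hGon, hXU₀, hseq⟩ := hM
  obtain ⟨φ, hfix, hconn, hedge⟩ := hseq.exists_phi
  have hXfix : ∀ x ∈ X, φ x = x := fun x hx => hfix x (hseq.X_subset hXU₀ hx)
  constructor
  · rintro ⟨u, v, WM, hWM, hXspan⟩
    by_cases hn : WM.Nil
    · have hsupp : WM.support = [u] := Walk.nil_iff_support_eq.mp hn
      have hXu : ∀ x ∈ X, x = u := by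
        intro x hx
        have := hXspan x hx
        rw [hsupp] at this
        simpa using this
      refine ⟨u, u, Walk.nil, by simp, id, fun x _ => Walk.nil, fun x hx => by simp,
        ?_, ?_, ?_⟩
      · intro x hx z hz hzX
        simpa using hz
      · intro x hx z hz
        have hzx : z = x := by simpa using hz
        subst hzx
        simp [hXu z hx]
      · intro x hx x' hx' hne z hz hz'
        exact hne ((by simpa using hz : z = x) ▸ (by simpa using hz' : z = x'))
    · obtain ⟨a, b, Q, hQ, hφa, hφb, hsupmap, hcover, hsi, hei⟩ :=
        key_path hconn hedge WM hWM hn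
      obtain ⟨y, P, c1, c2, c3, c4⟩ := pendants_exist hHG hconn X hXfix Q.support
        (fun x hx => hcover x (hXspan x hx))
      refine ⟨a, b, Q.mapLe hHG, hQ.mapLe _, y, P, c1, c2, ?_, c4⟩
      intro x hx z hz
      rw [support_mapLe_eq]
      exact c3 x hx z hz
  · rintro ⟨w, C, hC, hXspan⟩
    cases C with
    | nil => exact absurd rfl hC.ne_nil
    | @cons _ m₂ _ h D =>
      obtain ⟨hDpath, hEdgeD⟩ := (Walk.cons_isCycle_iff D h).mp hC
      have hDnil : ¬ D.Nil := fun hn => h.ne hn.eq.symm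
      have hm₂w : w ≠ m₂ := h.ne
      obtain ⟨a, b, Q, hQ, hφa, hφb, hsupmap, hcover, hsi, hei⟩ :=
        key_path hconn hedge D hDpath hDnil
      obtain ⟨p, q, hpw, hqm, hpq⟩ := hedge w m₂ h
      obtain ⟨S₁, hS₁path, hS₁fib⟩ := fiber_path hconn hφb hpw
      obtain ⟨S₂, hS₂path, hS₂fib⟩ := fiber_path hconn hqm hφa
      have hQS₁ : (Q.append S₁).IsPath :=
        isPath_append_aux hQ hS₁path (fun z hz hz' => hei z hz (hS₁fib z hz'))
      have hT : (S₂.append (Q.append S₁)).IsPath := by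
        refine isPath_append_aux hS₂path hQS₁ ?_
        intro z hz hz'
        rw [Walk.mem_support_append_iff] at hz'
        rcases hz' with hzQ | hzS₁
        · exact hsi z hzQ (hS₂fib z hz)
        · exact ((hm₂w.symm) ((hS₂fib z hz).symm.trans (hS₁fib z hzS₁))).elim
      obtain ⟨u₂, h₂, D', rfl⟩ := (Walk.not_nil_iff).mp hDnil
      have hD'nil : ¬ D'.Nil := by
        intro hnn
        have h3 := hC.three_le_length
        simp [Walk.length_cons, Walk.nil_iff_length_eq.mp hnn] at h3
      have hu₂m₂ : u₂ ≠ m₂ := by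
        have hc := (Walk.cons_isPath_iff h₂ D').mp hDpath
        exact fun he => hc.2 (he ▸ D'.start_mem_support)
      have hu₂w : u₂ ≠ w := by
        intro he
        subst he
        exact hD'nil (Walk.nil_iff_eq_nil.mpr ((Walk.isPath_iff_eq_nil).mp
          ((Walk.cons_isPath_iff h₂ D').mp hDpath).1))
      have hno : s(p, q) ∉ (S₂.append (Q.append S₁)).edges := by
        intro he
        have he' : s(q, p) ∈ (S₂.append (Q.append S₁)).edges := by rwa [Sym2.eq_swap] at he
        obtain ⟨hqp, T', hTeq⟩ := path_first_edge _ hT he'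
        have hT'path : T'.IsPath := by
          rw [hTeq] at hT
          exact ((Walk.cons_isPath_iff _ _).mp hT).1
        have hT'nil : T' = Walk.nil := (Walk.isPath_iff_eq_nil).mp hT'path
        have hTsupp : (S₂.append (Q.append S₁)).support = [q, p] := by
          rw [hTeq, hT'nil]; simp
        obtain ⟨c', hc'Q, hφc'⟩ := hcover u₂ (by simp [D'.start_mem_support])
        have hc'mem : c' ∈ (S₂.append (Q.append S₁)).support := by
          rw [Walk.mem_support_append_iff, Walk.mem_support_append_iff]
          exact Or.inr (Or.inl hc'Q)
        rw [hTsupp] at hc'mem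
        rcases (by simpa using hc'mem : c' = q ∨ c' = p) with rfl | rfl
        · exact hu₂m₂ (hφc'.symm.trans hqm)
        · exact hu₂w (hφc'.symm.trans hpw)
      have hCyc : (Walk.cons hpq (S₂.append (Q.append S₁))).IsCycle :=
        (Walk.cons_isCycle_iff _ hpq).mpr ⟨hT, hno⟩
      have hrep : ∀ x ∈ X, ∃ c ∈ (Walk.cons hpq (S₂.append (Q.append S₁))).support,
          φ c = x := by
        intro x hx
        have hxC := hXspan x hx
        rcases (by simpa using hxC : x = w ∨ x ∈ (Walk.cons h₂ D').support) with rfl | hx'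
        · exact ⟨p, by simp, hpw⟩
        · obtain ⟨c, hcQ, hφc⟩ := hcover x hx'
          refine ⟨c, ?_, hφc⟩
          rw [Walk.support_cons, List.mem_cons]
          refine Or.inr ?_
          rw [Walk.mem_support_append_iff, Walk.mem_support_append_iff]
          exact Or.inr (Or.inl hcQ)
      obtain ⟨y, P, c1, c2, c3, c4⟩ := pendants_exist hHG hconn X hXfix
        (Walk.cons hpq (S₂.append (Q.append S₁))).support hrep
      refine ⟨p, (Walk.cons hpq (S₂.append (Q.append S₁))).mapLe hHG, hCyc.mapLe _,
        y, P, c1, c2, ?_, c4⟩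
      intro x hx z hz
      rw [support_mapLe_eq]
      exact c3 x hx z hz
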